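/- Counting of unstable roots: suppose the coefficients a_{-r},...,a_p with a_{-r}a_p ≠ 0 satisfy the ℓ²-stability condition sup_θ |Σ_ℓ a_ℓ e^{iℓθ}| ≤ 1, the consistency conditions of order ≥ 1 with λa > 0, and the characteristic polynomial A(X) = Σ_ℓ a_ℓ X^{ℓ+r} - X^r has exactly one root on the unit circle, namely 1. Then the sum of multiplicities of the roots of A lying strictly outside the closed unit disk equals p. -/

import Mathlib

open Polynomial Complex Metric

lemma logderiv_poly : ∀ (n : ℕ) (P : ℂ[X]), P ≠ 0 → Multiset.card P.roots = n →
    ∀ z : ℂ, eval z P ≠ 0 →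
    eval z (derivative P) / eval z P = (P.roots.map (fun w => (z - w)⁻¹)).sum := by
  intro n
  induction n with
  | zero =>
    intro P hP hcard z hz
    have hr : P.roots = 0 := Multiset.card_eq_zero.mp hcard
    have : P.natDegree = 0 := by
      by_contra h
      obtain ⟨w, hw⟩ := Complex.exists_root (f := P) (by
        rw [Polynomial.degree_eq_natDegree hP]
        exact_mod_cast Nat.pos_of_ne_zero h)
      have : w ∈ P.roots := by rwa [mem_roots hP]
      simp [hr] at this
    obtain ⟨c, rfl⟩ := Polynomial.natDegree_eq_zero.mp this
    simp [hr]
  | succ n ih =>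
    intro P hP hcard z hz
    have hne : P.roots ≠ 0 := by
      intro h; rw [h] at hcard; simp at hcard
    obtain ⟨w, hw⟩ := Multiset.exists_mem_of_ne_zero hne
    have hwroot : P.IsRoot w := (mem_roots hP).mp hw
    obtain ⟨Q, hQ⟩ := (Polynomial.dvd_iff_isRoot).mpr hwroot
    have hQ0 : Q ≠ 0 := by rintro rfl; simp at hQ; exact hP hQ
    have hmul : (X - C w) * Q ≠ 0 := hQ ▸ hP
    have hroots : P.roots = w ::ₘ Q.roots := by
      rw [hQ, Polynomial.roots_mul hmul, Polynomial.roots_X_sub_C]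
      rfl
    have hcardQ : Multiset.card Q.roots = n := by
      rw [hroots] at hcard; simpa using hcard
    have hzw : z - w ≠ 0 := by
      intro h
      apply hz
      rw [hQ]; simp [sub_eq_zero.mp h]
    have hzQ : eval z Q ≠ 0 := by
      intro h; apply hz; rw [hQ]; simp [h]
    have ihQ := ih Q hQ0 hcardQ z hzQ
    rw [hroots, Multiset.map_cons, Multiset.sum_cons, ← ihQ, hQ]
    simp only [derivative_mul, derivative_sub, derivative_X, derivative_C, sub_zero, one_mul,
      eval_add, eval_mul, eval_sub, eval_X, eval_C]
    field_simp

lemma circleint_multiset (R : ℝ) (hR : 0 < R) :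
    ∀ (s : Multiset ℂ), (∀ w ∈ s, ‖w‖ ≠ R) →
    (∮ z in C(0, R), (s.map (fun w => (z - w)⁻¹)).sum)
      = 2 * Real.pi * I * (Multiset.card (s.filter (fun w => ‖w‖ < R)) : ℂ) := by
  have hintg : ∀ w : ℂ, ‖w‖ ≠ R → CircleIntegrable (fun z => (z - w)⁻¹) 0 R := by
    intro w hw
    refine ContinuousOn.circleIntegrable hR.le ?_
    intro z hz
    have hzw : z - w ≠ 0 := by
      intro h
      rw [sub_eq_zero] at h
      apply hw
      rw [← h]
      simpa using hz
    exact ((continuousAt_id.sub continuousAt_const).continuousWithinAt).inv₀ hzw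
  have hintgsum : ∀ (s : Multiset ℂ), (∀ w ∈ s, ‖w‖ ≠ R) →
      CircleIntegrable (fun z => (s.map (fun w => (z - w)⁻¹)).sum) 0 R := by
    intro s
    induction s using Multiset.induction with
    | empty => intro _; simpa using circleIntegrable_const (0:ℂ) (0:ℂ) R
    | cons a s ih =>
      intro h
      have h1 := hintg a (h a (Multiset.mem_cons_self a s))
      have h2 := ih (fun w hw => h w (Multiset.mem_cons_of_mem hw))
      simpa [Pi.add_def] using h1.add h2
  intro s
  induction s using Multiset.induction with
  | empty => simp [circleIntegral]
  | cons a s ih =>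
    intro h
    have ha := h a (Multiset.mem_cons_self a s)
    have hs : ∀ w ∈ s, ‖w‖ ≠ R := fun w hw => h w (Multiset.mem_cons_of_mem hw)
    have key : (∮ z in C(0, R), (s.map (fun w => (z - w)⁻¹)).sum)
        = (∮ z in C(0, R), ((a ::ₘ s).map (fun w => (z - w)⁻¹)).sum)
          - ∮ z in C(0, R), (z - a)⁻¹ := by
      rw [← circleIntegral.integral_sub (hintgsum (a ::ₘ s) h) (hintg a ha)]
      apply circleIntegral.integral_congr hR.le
      intro z _
      simp
    rw [eq_sub_iff_add_eq] at key
    rw [← key, ih hs]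
    have hone : (∮ z in C(0, R), (z - a)⁻¹)
        = 2 * Real.pi * I * (if ‖a‖ < R then 1 else 0) := by
      rcases lt_or_gt_of_ne ha with hlt | hgt
      · rw [circleIntegral.integral_sub_inv_of_mem_ball (by simpa using hlt), if_pos hlt,
          mul_one]
      · rw [if_neg (by exact not_lt.mpr hgt.le)]
        rw [mul_zero]
        apply Complex.circleIntegral_eq_zero_of_differentiable_on_off_countable hR.le
          Set.countable_empty
        · intro z hz
          have : z - a ≠ 0 := by
            intro hza
            rw [sub_eq_zero] at hza
            subst hza
            simp only [mem_closedBall, dist_zero_right] at hz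
            exact absurd (lt_of_lt_of_le hgt (by simpa using hz)) (lt_irrefl _)
          exact ((continuousAt_id.sub continuousAt_const).continuousWithinAt).inv₀ this
        · intro z hz
          have : z - a ≠ 0 := by
            intro hza
            rw [sub_eq_zero] at hza
            subst hza
            simp only [Set.mem_diff, mem_ball, dist_zero_right] at hz
            exact absurd (hgt.trans (by simpa using hz.1)) (lt_irrefl _)
          exact (differentiableAt_id.sub_const a).inv this
    rw [hone, Multiset.filter_cons]
    by_cases hc : ‖a‖ < R
    · simp only [hc, if_true, if_pos hc, Multiset.card_add, Multiset.card_singleton,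
        Nat.cast_add, Nat.cast_one]
      ring
    · simp only [hc, if_false, if_neg hc, Multiset.card_zero, Multiset.card_add, Nat.cast_zero,
      Nat.cast_add]
      ring

lemma arg_principle (P : ℂ[X]) (hP : P ≠ 0) {R : ℝ} (hR : 0 < R)
    (h : ∀ z : ℂ, ‖z‖ = R → eval z P ≠ 0) :
    (∮ z in C(0, R), eval z (derivative P) / eval z P)
      = 2 * Real.pi * I * (Multiset.card (P.roots.filter (fun z => ‖z‖ < R)) : ℂ) := by
  have hroots : ∀ w ∈ P.roots, ‖w‖ ≠ R := by
    intro w hw habs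
    exact h w habs ((mem_roots hP).mp hw)
  have := circleint_multiset R hR P.roots hroots
  rw [← this]
  apply circleIntegral.integral_congr hR.le
  intro z hz
  have hzR : ‖z‖ = R := by simpa using hz
  exact logderiv_poly (Multiset.card P.roots) P hP rfl z (h z hzR)

lemma rouche_count (P Q : ℂ[X]) {R : ℝ} (hR : 0 < R)
    (h : ∀ z : ℂ, ‖z‖ = R →
      ‖eval z P - eval z Q‖ < ‖eval z Q‖) :
    Multiset.card (P.roots.filter (fun z => ‖z‖ < R))
      = Multiset.card (Q.roots.filter (fun z => ‖z‖ < R)) := by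
  have hQc : ∀ z : ℂ, ‖z‖ = R → eval z Q ≠ 0 := by
    intro z hz h0
    have := h z hz
    rw [h0] at this
    simp at this
    exact absurd this (norm_nonneg _).not_gt
  have hPc : ∀ z : ℂ, ‖z‖ = R → eval z P ≠ 0 := by
    intro z hz h0
    have := h z hz
    rw [h0] at this
    simp at this
  have hz₀ : ‖(R : ℂ)‖ = R := by
    rw [Complex.norm_real, Real.norm_eq_abs, abs_of_pos hR]
  have hP0 : P ≠ 0 := fun h' => hPc R hz₀ (by rw [h']; simp)
  have hQ0 : Q ≠ 0 := fun h' => hQc R hz₀ (by rw [h']; simp)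
  set γ := circleMap 0 R with hγdef
  have hγ : ∀ θ : ℝ, ‖γ θ‖ = R := fun θ => by
    rw [hγdef, norm_circleMap_zero, abs_of_pos hR]
  -- derivative of eval along the circle
  have hod : ∀ (S : ℂ[X]) (θ : ℝ),
      HasDerivAt (fun t : ℝ => eval (γ t) S) (γ θ * I * eval (γ θ) (derivative S)) θ := by
    intro S θ
    have h1 : HasDerivAt γ (γ θ * I) θ := hasDerivAt_circleMap 0 R θ
    have h2 := S.hasDerivAt (γ θ)
    have := h2.comp θ h1
    rw [show γ θ * I * eval (γ θ) (derivative S) = eval (γ θ) (derivative S) * (γ θ * I) by ring]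
    exact this
  set u : ℝ → ℂ := fun θ => eval (γ θ) P / eval (γ θ) Q with hudef
  have hu1 : ∀ θ : ℝ, ‖u θ - 1‖ < 1 := by
    intro θ
    have hq := hQc (γ θ) (hγ θ)
    rw [hudef]
    simp only [div_sub_one hq, norm_div]
    rw [div_lt_one (by
      have hq' := hQc (γ θ) (hγ θ)
      exact (norm_pos_iff.mpr hq'))]
    exact h (γ θ) (hγ θ)
  have hure : ∀ θ : ℝ, 0 < (u θ).re := by
    intro θ
    have h1 := hu1 θ
    have h2 : |(u θ - 1).re| ≤ ‖u θ - 1‖ := Complex.abs_re_le_norm _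
    have h3 : (u θ - 1).re = (u θ).re - 1 := by simp
    rw [h3] at h2
    rw [abs_le] at h2
    linarith [h2.1]
  set D : ℝ → ℂ := fun θ =>
    γ θ * I * eval (γ θ) (derivative P) / eval (γ θ) P
      - γ θ * I * eval (γ θ) (derivative Q) / eval (γ θ) Q with hDdef
  have hD : ∀ θ : ℝ, HasDerivAt (fun t => Complex.log (u t)) (D θ) θ := by
    intro θ
    have hv := hod P θ
    have hw := hod Q θ
    have hu : HasDerivAt u
        ((γ θ * I * eval (γ θ) (derivative P) * eval (γ θ) Q
          - eval (γ θ) P * (γ θ * I * eval (γ θ) (derivative Q))) / (eval (γ θ) Q) ^ 2) θ :=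
      hv.div hw (hQc _ (hγ θ))
    have hlog := hu.clog_real (Complex.mem_slitPlane_iff.mpr (Or.inl (hure θ)))
    convert hlog using 1
    rw [hDdef, hudef]
    have hp := hPc (γ θ) (hγ θ)
    have hq := hQc (γ θ) (hγ θ)
    field_simp
  have hceval : ∀ S : ℂ[X], Continuous (fun θ : ℝ => eval (γ θ) S) := by
    intro S
    exact (S.continuous).comp (continuous_circleMap 0 R)
  have hcont1 : Continuous (fun θ : ℝ => γ θ * I * eval (γ θ) (derivative P) / eval (γ θ) P) :=
    Continuous.div (((continuous_circleMap 0 R).mul continuous_const).mul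
      (hceval (derivative P))) (hceval P) (fun θ => hPc _ (hγ θ))
  have hcont2 : Continuous (fun θ : ℝ => γ θ * I * eval (γ θ) (derivative Q) / eval (γ θ) Q) :=
    Continuous.div (((continuous_circleMap 0 R).mul continuous_const).mul
      (hceval (derivative Q))) (hceval Q) (fun θ => hQc _ (hγ θ))
  have hint : ∫ θ in (0:ℝ)..(2 * Real.pi), D θ
      = Complex.log (u (2 * Real.pi)) - Complex.log (u 0) :=
    intervalIntegral.integral_eq_sub_of_hasDerivAt (fun θ _ => hD θ)
      ((hcont1.sub hcont2).intervalIntegrable _ _)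
  have hper : u (2 * Real.pi) = u 0 := by
    have hγper : γ (2 * Real.pi) = γ 0 := by
      have := periodic_circleMap 0 R 0
      rw [zero_add] at this
      exact this
    rw [hudef]
    simp only [hγper]
  have hDzero : (∫ θ in (0:ℝ)..(2 * Real.pi), D θ) = 0 := by
    rw [hint, hper, sub_self]
  have e : ∀ S : ℂ[X], (∮ z in C(0, R), eval z (derivative S) / eval z S)
      = ∫ θ in (0:ℝ)..(2 * Real.pi), γ θ * I * eval (γ θ) (derivative S) / eval (γ θ) S := by
    intro S
    rw [circleIntegral]
    apply intervalIntegral.integral_congr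
    intro θ _
    simp only [deriv_circleMap, smul_eq_mul, hγdef]
    ring
  have h1 := arg_principle P hP0 hR hPc
  have h2 := arg_principle Q hQ0 hR hQc
  have hsub : (∫ θ in (0:ℝ)..(2 * Real.pi), γ θ * I * eval (γ θ) (derivative P) / eval (γ θ) P)
      - (∫ θ in (0:ℝ)..(2 * Real.pi), γ θ * I * eval (γ θ) (derivative Q) / eval (γ θ) Q) = 0 := by
    rw [← intervalIntegral.integral_sub (hcont1.intervalIntegrable _ _)
      (hcont2.intervalIntegrable _ _)]
    exact hDzero
  have hmain : 2 * (Real.pi : ℂ) * I *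
        (Multiset.card (P.roots.filter (fun z => ‖z‖ < R)) : ℂ)
      = 2 * (Real.pi : ℂ) * I *
        (Multiset.card (Q.roots.filter (fun z => ‖z‖ < R)) : ℂ) := by
    rw [← h1, ← h2, e P, e Q]
    exact sub_eq_zero.mp hsub
  have hne : (2 * (Real.pi : ℂ) * I) ≠ 0 := by
    simp [Real.pi_ne_zero, I_ne_zero]
  exact Nat.cast_injective (mul_left_cancel₀ hne hmain)

lemma rootmult_one (P : ℂ[X]) (hP : P ≠ 0) (h1 : P.IsRoot 1)
    (h2 : eval 1 (derivative P) ≠ 0) : P.roots.count 1 = 1 := by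
  rw [Polynomial.count_roots]
  have hpos : 0 < P.rootMultiplicity 1 := (Polynomial.rootMultiplicity_pos hP).mpr h1
  have hlt : P.rootMultiplicity 1 < 2 := by
    by_contra hge
    push_neg at hge
    have hdvd : (X - C (1:ℂ)) ^ 2 ∣ P :=
      dvd_trans (pow_dvd_pow _ hge) (Polynomial.pow_rootMultiplicity_dvd P 1)
    obtain ⟨T, hT⟩ := hdvd
    apply h2
    rw [hT]
    simp [derivative_mul, derivative_pow]
  omega

lemma taylor2 (P : ℂ[X]) (h1 : P.IsRoot 1) :
    ∃ T : ℂ[X], ∀ z : ℂ,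
      eval z P = eval 1 (derivative P) * (z - 1) + (z - 1) ^ 2 * eval z T := by
  obtain ⟨Q, hQ⟩ := (Polynomial.dvd_iff_isRoot).mpr h1
  have hder : eval 1 (derivative P) = eval 1 Q := by
    rw [hQ]
    simp [derivative_mul]
  obtain ⟨T, hT⟩ := (Polynomial.dvd_iff_isRoot).mpr
    (show (Q - C (eval 1 Q)).IsRoot 1 by simp [IsRoot])
  refine ⟨T, fun z => ?_⟩
  have hQz : eval z Q - eval 1 Q = (z - 1) * eval z T := by
    have := congrArg (eval z) hT
    simpa using this
  have hQz' : eval z Q = eval 1 Q + (z - 1) * eval z T := by linear_combination hQz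
  conv_lhs => rw [hQ]
  rw [hder]
  simp only [eval_mul, eval_sub, eval_X, eval_C, hQz']
  ring

lemma pow_sub_one_bound {z : ℂ} (hz : ‖z‖ ≤ 2) (n : ℕ) :
    ‖z ^ n - 1‖ ≤ 2 ^ n * ‖z - 1‖ := by
  have hgeom : (∑ i ∈ Finset.range n, z ^ i) * (z - 1) = z ^ n - 1 := geom_sum_mul z n
  rw [← hgeom, norm_mul]
  gcongr
  calc ‖∑ i ∈ Finset.range n, z ^ i‖
      ≤ ∑ i ∈ Finset.range n, ‖z ^ i‖ := by
        simpa using norm_sum_le (Finset.range n) (fun i => z ^ i)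
    _ ≤ ∑ i ∈ Finset.range n, (2:ℝ) ^ i := by
        apply Finset.sum_le_sum
        intro i _
        rw [norm_pow]
        exact pow_le_pow_left₀ (norm_nonneg z) hz i
    _ = 2 ^ n - 1 := by
        rw [geom_sum_eq (by norm_num : (2:ℝ) ≠ 1)]
        norm_num
    _ ≤ 2 ^ n := by linarith

lemma Bp_circle_bound (r p : ℕ) (coef : ℤ → ℝ)
    (hstab : ∀ θ : ℝ,
      ‖∑ ℓ ∈ Finset.Icc (-(r : ℤ)) (p : ℤ),
        (coef ℓ : ℂ) * Complex.exp (Complex.I * ℓ * θ)‖ ≤ 1)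
    {z : ℂ} (hz : ‖z‖ = 1) :
    ‖eval z (∑ ℓ ∈ Finset.Icc (-(r : ℤ)) (p : ℤ),
      C ((coef ℓ : ℂ)) * X ^ (ℓ + (r : ℤ)).toNat)‖ ≤ 1 := by
  set θ := Complex.arg z with hθ
  have hzexp : z = Complex.exp (θ * I) := by
    have := Complex.norm_mul_exp_arg_mul_I z
    rw [hz] at this
    simpa using this.symm
  have hterm : ∀ ℓ ∈ Finset.Icc (-(r : ℤ)) (p : ℤ),
      (coef ℓ : ℂ) * z ^ (ℓ + (r : ℤ)).toNat
        = ((coef ℓ : ℂ) * Complex.exp (I * ℓ * θ)) * Complex.exp ((θ * r) * I) := by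
    intro ℓ hℓ
    have h0 : (0 : ℤ) ≤ ℓ + r := by
      have := (Finset.mem_Icc.mp hℓ).1
      omega
    have hzpow : z ^ ((ℓ + (r : ℤ)).toNat)
        = Complex.exp ((((ℓ + (r : ℤ)).toNat : ℕ) : ℂ) * (θ * I)) := by
      rw [hzexp, ← Complex.exp_nat_mul]
    have hcast : (((ℓ + (r : ℤ)).toNat : ℕ) : ℂ) = (ℓ : ℂ) + (r : ℂ) := by
      have := Int.toNat_of_nonneg h0
      exact_mod_cast congrArg (Int.cast : ℤ → ℂ) this
    rw [hzpow, hcast, show ((ℓ : ℂ) + (r : ℂ)) * (θ * I) = I * ℓ * θ + (θ * r) * I by ring,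
      Complex.exp_add]
    ring
  rw [Polynomial.eval_finset_sum]
  simp only [eval_mul, eval_C, eval_pow, eval_X]
  rw [Finset.sum_congr rfl hterm, ← Finset.sum_mul, norm_mul]
  have habs1 : ‖Complex.exp ((θ * r : ℂ) * I)‖ = 1 := by
    rw [show ((θ : ℂ) * r) * I = ((θ * r : ℝ) : ℂ) * I by push_cast; ring]
    exact Complex.norm_exp_ofReal_mul_I _
  rw [habs1, mul_one]
  exact hstab θ

lemma derivA_one (r p : ℕ) (coef : ℤ → ℝ) (lam a : ℝ)
    (hcons0 : ∑ ℓ ∈ Finset.Icc (-(r : ℤ)) (p : ℤ), coef ℓ = 1)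
    (hcons1 : ∑ ℓ ∈ Finset.Icc (-(r : ℤ)) (p : ℤ), (ℓ : ℝ) * coef ℓ = -(lam * a)) :
    eval 1 (derivative ((∑ ℓ ∈ Finset.Icc (-(r : ℤ)) (p : ℤ),
        C ((coef ℓ : ℂ)) * X ^ (ℓ + (r : ℤ)).toNat) - X ^ r))
      = ((-(lam * a) : ℝ) : ℂ) := by
  rw [derivative_sub, Polynomial.derivative_sum, eval_sub, Polynomial.eval_finset_sum]
  have hterm : ∀ ℓ ∈ Finset.Icc (-(r : ℤ)) (p : ℤ),
      eval 1 (derivative (C ((coef ℓ : ℂ)) * X ^ (ℓ + (r : ℤ)).toNat))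
        = (coef ℓ : ℂ) * ((ℓ : ℂ) + (r : ℂ)) := by
    intro ℓ hℓ
    have h0 : (0 : ℤ) ≤ ℓ + r := by
      have := (Finset.mem_Icc.mp hℓ).1
      omega
    rw [Polynomial.derivative_C_mul_X_pow]
    simp only [eval_mul, eval_C, eval_pow, eval_X, one_pow, mul_one]
    congr 1
    have := Int.toNat_of_nonneg h0
    exact_mod_cast congrArg (Int.cast : ℤ → ℂ) this
  rw [Finset.sum_congr rfl hterm]
  rw [Polynomial.derivative_X_pow]
  simp only [eval_mul, eval_C, eval_pow, eval_X, one_pow, mul_one]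
  have h1 : ∑ ℓ ∈ Finset.Icc (-(r : ℤ)) (p : ℤ), (coef ℓ : ℂ) * ((ℓ : ℂ) + (r : ℂ))
      = (((∑ ℓ ∈ Finset.Icc (-(r : ℤ)) (p : ℤ), (ℓ : ℝ) * coef ℓ) : ℝ) : ℂ)
        + (r : ℂ) * (((∑ ℓ ∈ Finset.Icc (-(r : ℤ)) (p : ℤ), coef ℓ) : ℝ) : ℂ) := by
    push_cast
    rw [Finset.mul_sum, ← Finset.sum_add_distrib]
    apply Finset.sum_congr rfl
    intros
    ring
  rw [h1, hcons0, hcons1]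
  push_cast
  ring

set_option maxHeartbeats 2000000 in
/-- Counting of unstable roots: under the ℓ²-stability condition, the consistency
conditions of order ≥ 1 with `λa > 0`, and the assumption that the characteristic
polynomial `A` has `1` as its unique root on the unit circle, the number of roots
of `A` (with multiplicity) lying strictly outside the closed unit disk equals `p`. -/
theorem count_unstable_roots (r p : ℕ) (a lam : ℝ) (ha : 0 < a) (hlam : 0 < lam)
    (coef : ℤ → ℝ) (hnorm : coef (-(r : ℤ)) * coef (p : ℤ) ≠ 0)
    (hstab : ∀ θ : ℝ,
      ‖∑ ℓ ∈ Finset.Icc (-(r : ℤ)) (p : ℤ),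
        (coef ℓ : ℂ) * Complex.exp (Complex.I * ℓ * θ)‖ ≤ 1)
    (hcons0 : ∑ ℓ ∈ Finset.Icc (-(r : ℤ)) (p : ℤ), coef ℓ = 1)
    (hcons1 : ∑ ℓ ∈ Finset.Icc (-(r : ℤ)) (p : ℤ), (ℓ : ℝ) * coef ℓ = -(lam * a))
    (A : Polynomial ℂ)
    (hA : A = (∑ ℓ ∈ Finset.Icc (-(r : ℤ)) (p : ℤ),
        Polynomial.C ((coef ℓ : ℂ)) * Polynomial.X ^ (ℓ + (r : ℤ)).toNat)
      - Polynomial.X ^ r)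
    (hcircle : ∀ z : ℂ, A.IsRoot z → ‖z‖ = 1 → z = 1) :
    Multiset.card (A.roots.filter fun z => 1 < ‖z‖) = p := by
  classical
  set μ : ℝ := lam * a with hμdef
  have hμ : 0 < μ := mul_pos hlam ha
  set Bp : ℂ[X] := ∑ ℓ ∈ Finset.Icc (-(r : ℤ)) (p : ℤ),
      C ((coef ℓ : ℂ)) * X ^ (ℓ + (r : ℤ)).toNat with hBpdef
  have hABp : ∀ z : ℂ, eval z A = eval z Bp - z ^ r := by
    intro z; rw [hA]; simp
  have hBcirc : ∀ z : ℂ, ‖z‖ = 1 → ‖eval z Bp‖ ≤ 1 :=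
    fun z hz => Bp_circle_bound r p coef hstab hz
  have hA1 : eval 1 A = 0 := by
    rw [hABp 1, hBpdef, Polynomial.eval_finset_sum]
    simp only [eval_mul, eval_C, eval_pow, eval_X, one_pow, mul_one]
    have hc : (∑ ℓ ∈ Finset.Icc (-(r : ℤ)) (p : ℤ), ((coef ℓ : ℝ) : ℂ)) = ((1:ℝ):ℂ) := by
      exact_mod_cast congrArg (fun x : ℝ => (x : ℂ)) hcons0
    rw [hc]
    simp
  have hA'1 : eval 1 (derivative A) = ((-μ : ℝ) : ℂ) := by
    rw [hA]; exact derivA_one r p coef lam a hcons0 hcons1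
  have hA'ne : eval 1 (derivative A) ≠ 0 := by
    rw [hA'1]
    simpa using hμ.ne'
  have hAne : A ≠ 0 := by
    intro h
    apply hA'ne
    rw [h]
    simp
  have hroot1 : A.IsRoot 1 := hA1
  have hcount1 : A.roots.count 1 = 1 := rootmult_one A hAne hroot1 hA'ne
  have hcard : Multiset.card A.roots = A.natDegree :=
    (Polynomial.splits_iff_card_roots.mp (IsAlgClosed.splits A))
  have hdeg_le : A.natDegree ≤ r + p := by
    rw [hA]
    refine le_trans (Polynomial.natDegree_sub_le _ _) (max_le ?_ ?_)
    · apply Polynomial.natDegree_sum_le_of_forall_le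
      intro ℓ hℓ
      refine le_trans (Polynomial.natDegree_C_mul_le _ _) ?_
      rw [Polynomial.natDegree_X_pow]
      have h2 := (Finset.mem_Icc.mp hℓ).2
      omega
    · rw [Polynomial.natDegree_X_pow]
      omega
  have hmemroot : ∀ w ∈ A.roots, A.IsRoot w := fun w hw => (mem_roots hAne).mp hw
  -- separation radius η
  obtain ⟨η, hη0, hη2, hηsep⟩ : ∃ η : ℝ, 0 < η ∧ η ≤ 1/2 ∧ ∀ w ∈ A.roots,
      ‖w‖ = 1 ∨ ‖w‖ < 1 - η ∨ 1 + η < ‖w‖ := by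
    by_cases hS : ∃ w ∈ A.roots, ‖w‖ ≠ 1
    · set S : Finset ℝ := (A.roots.toFinset.filter (fun w => ‖w‖ ≠ 1)).image
        (fun w => |‖w‖ - 1|) with hSdef
      have hSne : S.Nonempty := by
        obtain ⟨w, hw, hwne⟩ := hS
        exact ⟨|‖w‖ - 1|, Finset.mem_image_of_mem _
          (Finset.mem_filter.mpr ⟨Multiset.mem_toFinset.mpr hw, hwne⟩)⟩
      have hc0 : 0 < S.min' hSne := by
        obtain ⟨w, hw, hweq⟩ := Finset.mem_image.mp (S.min'_mem hSne)
        rw [← hweq]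
        exact abs_pos.mpr (sub_ne_zero.mpr (Finset.mem_filter.mp hw).2)
      refine ⟨min (1/2) (S.min' hSne/2), by positivity, min_le_left _ _, ?_⟩
      intro w hw
      by_cases habs : ‖w‖ = 1
      · exact Or.inl habs
      · have hcle : S.min' hSne ≤ |‖w‖ - 1| := by
          apply Finset.min'_le
          exact Finset.mem_image_of_mem _
            (Finset.mem_filter.mpr ⟨Multiset.mem_toFinset.mpr hw, habs⟩)
        have hη : min (1/2) (S.min' hSne/2) < S.min' hSne :=
          lt_of_le_of_lt (min_le_right _ _) (by linarith)
        rcases lt_or_gt_of_ne habs with h | h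
        · refine Or.inr (Or.inl ?_)
          rw [abs_of_neg (by linarith : ‖w‖ - 1 < 0)] at hcle
          linarith
        · refine Or.inr (Or.inr ?_)
          rw [abs_of_pos (by linarith : (0:ℝ) < ‖w‖ - 1)] at hcle
          linarith
    · push_neg at hS
      exact ⟨1/2, by norm_num, le_refl _, fun w hw => Or.inl (hS w hw)⟩
  -- Taylor expansion at 1
  obtain ⟨T, hT⟩ := taylor2 A hroot1
  obtain ⟨K, hK1, hKb⟩ : ∃ K : ℝ, 1 ≤ K ∧ ∀ z : ℂ, ‖z - 1‖ ≤ 1 →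
      ‖eval z T‖ ≤ K := by
    obtain ⟨z₀, hz₀m, hz₀⟩ := (isCompact_closedBall (1:ℂ) 1).exists_isMaxOn
      ⟨1, by simp⟩ ((continuous_norm.comp T.continuous).continuousOn)
    refine ⟨max 1 (‖eval z₀ T‖), le_max_left _ _, fun z hz => ?_⟩
    have hzm : z ∈ closedBall (1:ℂ) 1 := by
      simpa [Metric.mem_closedBall, Complex.dist_eq] using hz
    exact le_trans (isMaxOn_iff.mp hz₀ z hzm) (le_max_right _ _)
  set ε : ℝ := min (1 / 2 ^ (r+1)) (min (μ / (4*K)) 1) with hεdef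
  have hε0 : 0 < ε := by
    have : (0:ℝ) < μ / (4*K) := by positivity
    simp only [hεdef, lt_min_iff]
    refine ⟨by positivity, this, by norm_num⟩
  have hε1 : ε ≤ 1 := (min_le_right _ _).trans (min_le_right _ _)
  have hεa : ε ≤ 1 / 2 ^ (r+1) := min_le_left _ _
  have hεb : ε ≤ μ / (4*K) := (min_le_right _ _).trans (min_le_left _ _)
  set Cc : ℝ := 2 * 2 ^ r / μ with hCcdef
  have hCc0 : 0 < Cc := by positivity
  set s₂ : ℝ := 1 / (2*K*Cc^2 + μ*Cc^2 + 1) with hs₂def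
  have hs₂0 : 0 < s₂ := by positivity
  -- key local analysis: roots near 1 are strictly inside the disk
  have hstep17 : ∀ s : ℝ, 0 < s → s ≤ s₂ → ∀ z : ℂ, eval z A = (s:ℂ) * z ^ r →
      ‖z - 1‖ ≤ ε → ‖z‖ < 1 := by
    intro s hs hss z hzeq hzδ
    set δ : ℂ := z - 1 with hδdef
    have habs_sub : ∀ x y : ℂ, ‖x - y‖ ≤ ‖x‖ + ‖y‖ :=
      fun x y => by simpa using norm_sub_le x y
    have hδa : ‖δ‖ ≤ ε := hzδ
    have hz1δ : z = 1 + δ := by rw [hδdef]; ring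
    have hz2 : ‖z‖ ≤ 2 := by
      rw [hz1δ]
      calc ‖1 + δ‖ ≤ ‖1‖ + ‖δ‖ := norm_add_le _ _
        _ ≤ 1 + 1 := by
            have := hδa.trans hε1
            simp only [norm_one]
            linarith
        _ = 2 := by norm_num
    have hTz : ‖eval z T‖ ≤ K := hKb z (hδa.trans hε1)
    have heq : (μ:ℂ) * δ = δ^2 * eval z T - (s:ℂ) * z^r := by
      have h1 := hT z
      rw [hA'1, hzeq] at h1
      rw [show z - 1 = δ from hδdef.symm] at h1
      push_cast at h1
      linear_combination h1
    have habsz : ‖(s:ℂ) * z^r‖ ≤ s * 2^r := by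
      rw [norm_mul, norm_pow, Complex.norm_real, Real.norm_eq_abs, abs_of_pos hs]
      have : ‖z‖ ^ r ≤ 2^r := pow_le_pow_left₀ (norm_nonneg z) hz2 r
      exact mul_le_mul_of_nonneg_left this hs.le
    have hdd : μ * ‖δ‖ ≤ s * 2^r + K * (‖δ‖)^2 := by
      have e1 : μ * ‖δ‖ = ‖(μ:ℂ) * δ‖ := by
        rw [norm_mul, Complex.norm_real, Real.norm_eq_abs, abs_of_pos hμ]
      rw [e1, heq]
      calc ‖δ^2 * eval z T - (s:ℂ) * z^r‖
          ≤ ‖δ^2 * eval z T‖ + ‖(s:ℂ) * z^r‖ := habs_sub _ _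
        _ ≤ K * (‖δ‖)^2 + s * 2^r := by
            have h1 : ‖δ^2 * eval z T‖ ≤ K * (‖δ‖)^2 := by
              rw [norm_mul, norm_pow]
              nlinarith [norm_nonneg δ, sq_nonneg (‖δ‖), hTz,
                norm_nonneg (eval z T)]
            linarith
        _ = s * 2^r + K * (‖δ‖)^2 := by ring
    have hd4 : K * (‖δ‖)^2 ≤ (μ/4) * ‖δ‖ := by
      have h1 : ‖δ‖ ≤ μ/(4*K) := hδa.trans hεb
      have hK0 : (0:ℝ) < K := lt_of_lt_of_le one_pos hK1
      have h2 : K * ‖δ‖ ≤ μ/4 := by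
        have h3 : K * ‖δ‖ ≤ K * (μ/(4*K)) := mul_le_mul_of_nonneg_left h1 hK0.le
        have h4 : K * (μ/(4*K)) = μ/4 := by
          field_simp
        linarith
      nlinarith [norm_nonneg δ, h2]
    have hCs : ‖δ‖ ≤ Cc * s := by
      rw [hCcdef]
      rw [div_mul_eq_mul_div, le_div_iff₀ hμ]
      have hpr : (0:ℝ) ≤ s * 2^r := by positivity
      linarith [hdd, hd4]
    have hrez : 1/2 ≤ (z^r).re := by
      have hb := pow_sub_one_bound hz2 r
      have h1 : ‖z^r - 1‖ ≤ 1/2 := by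
        refine hb.trans ?_
        have h2 : (2:ℝ)^r * ‖z-1‖ ≤ 2^r * (1/2^(r+1)) := by
          have := hδa.trans hεa
          exact mul_le_mul_of_nonneg_left this (by positivity)
        refine h2.trans (le_of_eq ?_)
        rw [pow_succ]
        field_simp
      have h2 : |(z^r - 1).re| ≤ ‖z^r - 1‖ := Complex.abs_re_le_norm _
      have h3 : (z^r - 1).re = (z^r).re - 1 := by simp
      rw [h3, abs_le] at h2
      linarith [h2.1]
    have hredelta : μ * δ.re ≤ K * (‖δ‖)^2 - s * (1/2) := by
      have h1 : ((μ:ℂ) * δ).re = μ * δ.re := by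
        simp [Complex.mul_re, Complex.ofReal_re, Complex.ofReal_im]
      have h2 : ((s:ℂ) * z^r).re = s * (z^r).re := by
        simp [Complex.mul_re, Complex.ofReal_re, Complex.ofReal_im]
      have h3 := congrArg Complex.re heq
      rw [Complex.sub_re, h1, h2] at h3
      have h4 : (δ^2 * eval z T).re ≤ K * (‖δ‖)^2 := by
        refine le_trans (Complex.re_le_norm _) ?_
        rw [norm_mul, norm_pow]
        nlinarith [norm_nonneg δ, sq_nonneg (‖δ‖), hTz,
          norm_nonneg (eval z T)]
      have h5 : s * (1/2) ≤ s * (z^r).re := mul_le_mul_of_nonneg_left hrez hs.le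
      linarith
    have hsq : (‖z‖)^2 = 1 + 2*δ.re + (‖δ‖)^2 := by
      rw [Complex.sq_norm, Complex.sq_norm, hz1δ]
      simp [Complex.normSq_apply, Complex.add_re, Complex.add_im, Complex.one_re,
        Complex.one_im]
      ring
    have hdsq : (‖δ‖)^2 ≤ Cc^2 * s^2 := by
      nlinarith [norm_nonneg δ, hCs, hCc0, hs]
    have h7 : s * (s * (2*K*Cc^2 + μ*Cc^2 + 1)) ≤ s * 1 := by
      have hD : (0:ℝ) < 2*K*Cc^2 + μ*Cc^2 + 1 := by positivity
      have h8 : s * (2*K*Cc^2 + μ*Cc^2 + 1) ≤ 1 := by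
        rw [hs₂def, le_div_iff₀ hD] at hss
        exact hss
      exact mul_le_mul_of_nonneg_left h8 hs.le
    have hsqlt : (‖z‖)^2 < 1 := by
      rw [hsq]
      by_contra hcon
      push_neg at hcon
      have h8 : 0 ≤ 2*δ.re + (‖δ‖)^2 := by linarith
      have h9 : 0 ≤ μ * (2*δ.re + (‖δ‖)^2) := mul_nonneg hμ.le h8
      nlinarith [hredelta, hdsq, h7, hμ, hK1, hs, sq_nonneg s]
    nlinarith [norm_nonneg z, hsqlt]
  -- minima of |A| on relevant compact sets
  have hnotroot : ∀ R : ℝ, (R = 1 - η ∨ R = 1 + η) → ∀ z : ℂ, ‖z‖ = R →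
      eval z A ≠ 0 := by
    intro R hR z hz hzero
    have hzr : z ∈ A.roots := (mem_roots hAne).mpr hzero
    rcases hR with rfl | rfl <;>
      rcases hηsep z hzr with h | h | h <;> rw [hz] at h <;> linarith
  obtain ⟨ε₂, hε₂0, hε₂le⟩ : ∃ e : ℝ, 0 < e ∧ ∀ z : ℂ, ‖z‖ = 1 + η →
      e ≤ ‖eval z A‖ := by
    obtain ⟨z₂, hz₂m, hz₂le⟩ := (isCompact_sphere (0:ℂ) (1+η)).exists_isMinOn
      (NormedSpace.sphere_nonempty.mpr (by linarith : (0:ℝ) ≤ 1 + η))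
      ((continuous_norm.comp A.continuous).continuousOn)
    have hmemiff : ∀ z : ℂ, z ∈ sphere (0:ℂ) (1+η) ↔ ‖z‖ = 1 + η := by
      intro z
      rw [mem_sphere_zero_iff_norm]
    refine ⟨_, norm_pos_iff.mpr (hnotroot _ (Or.inr rfl) z₂ ((hmemiff z₂).mp hz₂m)),
      fun z hz => isMinOn_iff.mp hz₂le z ((hmemiff z).mpr hz)⟩
  obtain ⟨m₃, hm₃0, hm₃le⟩ : ∃ e : ℝ, 0 < e ∧ ∀ z : ℂ,
      1 - η ≤ ‖z‖ → ‖z‖ ≤ 1 + η → ε ≤ ‖z - 1‖ →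
      e ≤ ‖eval z A‖ := by
    set Kc : Set ℂ := {z : ℂ | 1 - η ≤ ‖z‖ ∧ ‖z‖ ≤ 1 + η ∧
      ε ≤ ‖z-1‖} with hKcdef
    have hKcA : ∀ z ∈ Kc, eval z A ≠ 0 := by
      rintro z ⟨h1, h2, h3⟩ h0
      have hzr : z ∈ A.roots := (mem_roots hAne).mpr h0
      rcases hηsep z hzr with h | h | h
      · have hz1 := hcircle z h0 h
        rw [hz1] at h3
        simp at h3
        linarith
      · linarith
      · linarith
    have hKcc : IsCompact Kc := by
      have hclosed : IsClosed Kc := by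
        refine IsClosed.inter (isClosed_le continuous_const continuous_norm) ?_
        refine IsClosed.inter (isClosed_le continuous_norm continuous_const) ?_
        exact isClosed_le continuous_const
          (continuous_norm.comp (continuous_id.sub continuous_const))
      have hbdd : Bornology.IsBounded Kc := by
        apply (Metric.isBounded_closedBall (x := (0:ℂ)) (r := 2)).subset
        rintro z ⟨h1, h2, h3⟩
        rw [Metric.mem_closedBall, Complex.dist_eq, sub_zero]
        linarith
      exact Metric.isCompact_of_isClosed_isBounded hclosed hbdd
    by_cases hne : Kc.Nonempty
    · obtain ⟨z₃, hz₃m, hz₃le⟩ := hKcc.exists_isMinOn hne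
        ((continuous_norm.comp A.continuous).continuousOn)
      exact ⟨_, norm_pos_iff.mpr (hKcA z₃ hz₃m),
        fun z h1 h2 h3 => isMinOn_iff.mp hz₃le z ⟨h1, h2, h3⟩⟩
    · exact ⟨1, one_pos, fun z h1 h2 h3 => absurd ⟨z, h1, h2, h3⟩ hne⟩
  -- choice of the perturbation parameter
  set s : ℝ := min s₂ (min (m₃ / 2^(r+1)) (ε₂ / 2^(r+1))) with hsdef
  have hs0 : 0 < s := by
    simp only [hsdef, lt_min_iff]
    refine ⟨hs₂0, by positivity, by positivity⟩
  have hss₂ : s ≤ s₂ := min_le_left _ _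
  have hsm₃ : s ≤ m₃ / 2^(r+1) := (min_le_right _ _).trans (min_le_left _ _)
  have hsε₂ : s ≤ ε₂ / 2^(r+1) := (min_le_right _ _).trans (min_le_right _ _)
  set At : ℂ[X] := A - C ((s:ℝ):ℂ) * X ^ r with hAtdef
  have hAteval : ∀ z : ℂ, eval z At = eval z A - (s:ℂ) * z ^ r := by
    intro z; rw [hAtdef]; simp
  have hAtne : At ≠ 0 := by
    intro h
    have h1 : eval 1 At = 0 := by rw [h]; simp
    rw [hAteval, hA1] at h1
    simp at h1
    exact hs0.ne' h1
  -- Rouché I : At has exactly r roots in the open unit disk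
  have E1 : Multiset.card (At.roots.filter (fun z => ‖z‖ < 1)) = r := by
    have hc0 : (-(1+(s:ℂ))) ≠ 0 := by
      rw [show (1+(s:ℂ)) = ((1+s:ℝ):ℂ) by push_cast; ring]
      rw [neg_ne_zero]
      exact_mod_cast (by linarith : (1:ℝ) + s ≠ 0)
    have hrc := rouche_count At (C (-(1+(s:ℂ))) * X^r) one_pos ?_
    · rw [hrc, Polynomial.roots_C_mul_X_pow hc0]
      have hrep : ((r : ℕ) • ({0} : Multiset ℂ)) = Multiset.replicate r 0 := by
        simp [Multiset.nsmul_singleton]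
      rw [hrep, Multiset.filter_eq_self.mpr, Multiset.card_replicate]
      intro b hb
      rw [Multiset.eq_of_mem_replicate hb]
      simp
    · intro z hz
      have he : eval z At - eval z (C (-(1+(s:ℂ))) * X^r) = eval z Bp := by
        rw [hAteval, hABp]
        simp only [eval_mul, eval_C, eval_pow, eval_X]
        ring
      have h2 : ‖eval z (C (-(1+(s:ℂ))) * X^r)‖ = 1 + s := by
        simp only [eval_mul, eval_C, eval_pow, eval_X]
        rw [norm_mul, norm_pow, hz, one_pow, mul_one]
        rw [show (-(1+(s:ℂ))) = ((-(1+s):ℝ):ℂ) by push_cast; ring]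
        rw [Complex.norm_real, Real.norm_eq_abs, abs_of_neg (by linarith : -(1+s) < 0)]
        ring
      rw [he, h2]
      exact lt_of_le_of_lt (hBcirc z hz) (by linarith)
  -- Rouché II/III : counts at radii 1 ∓ η agree with those of A
  have E3 : Multiset.card (At.roots.filter (fun z => ‖z‖ < 1 + η))
      = Multiset.card (A.roots.filter (fun z => ‖z‖ < 1 + η)) := by
    apply rouche_count At A (by linarith : (0:ℝ) < 1 + η)
    intro z hz
    have he : eval z At - eval z A = -((s:ℂ) * z^r) := by
      rw [hAteval]
      ring
    rw [he]
    have h0 : ‖-((s:ℂ) * z^r)‖ = ‖(s:ℂ) * z^r‖ :=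
      norm_neg _
    rw [h0]
    have h1 : ‖(s:ℂ) * z^r‖ ≤ s * 2^r := by
      rw [norm_mul, norm_pow, Complex.norm_real, Real.norm_eq_abs, abs_of_pos hs0, hz]
      have : (1+η)^r ≤ (2:ℝ)^r := pow_le_pow_left₀ (by linarith) (by linarith) r
      exact mul_le_mul_of_nonneg_left this hs0.le
    have h2 : s * 2^r ≤ ε₂ / 2 := by
      have h3 : s * 2^r ≤ (ε₂/2^(r+1)) * 2^r :=
        mul_le_mul_of_nonneg_right hsε₂ (by positivity)
      have h4 : (ε₂/2^(r+1)) * (2:ℝ)^r = ε₂/2 := by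
        rw [pow_succ]
        field_simp
      linarith
    exact lt_of_le_of_lt (h1.trans h2) (lt_of_lt_of_le (by linarith) (hε₂le z hz))
  -- all roots of At in the annulus are strictly inside the unit disk
  have hann : ∀ z ∈ At.roots, ‖z‖ < 1 + η → ‖z‖ < 1 := by
    intro z hz hlt
    by_contra hge
    push_neg at hge
    have hz0 : eval z At = 0 := (mem_roots hAtne).mp hz
    have hzA : eval z A = (s:ℂ) * z^r := by
      rw [hAteval] at hz0
      linear_combination hz0
    have habsb : ‖(s:ℂ) * z^r‖ ≤ s * 2^r := by
      rw [norm_mul, norm_pow, Complex.norm_real, Real.norm_eq_abs, abs_of_pos hs0]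
      have : ‖z‖ ^ r ≤ 2^r :=
        pow_le_pow_left₀ (norm_nonneg z) (by linarith) r
      exact mul_le_mul_of_nonneg_left this hs0.le
    have hs2r : s * 2^r ≤ m₃ / 2 := by
      have h1 : s * 2^r ≤ (m₃/2^(r+1)) * 2^r :=
        mul_le_mul_of_nonneg_right hsm₃ (by positivity)
      have h2 : (m₃/2^(r+1)) * (2:ℝ)^r = m₃/2 := by
        rw [pow_succ]
        field_simp
      linarith
    have hloc : ‖z-1‖ ≤ ε := by
      by_contra hcon
      push_neg at hcon
      have h1 := hm₃le z (by linarith) hlt.le hcon.le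
      rw [hzA] at h1
      linarith
    exact absurd (hstep17 s hs0 hss₂ z hzA hloc) (not_lt.mpr hge)
  have hAtfilter : At.roots.filter (fun z => ‖z‖ < 1 + η)
      = At.roots.filter (fun z => ‖z‖ < 1) :=
    Multiset.filter_congr (fun z hz =>
      ⟨fun h => hann z hz h, fun h => h.trans_le (by linarith)⟩)
  -- counting on A's side
  have hcA_out : A.roots.filter (fun z => 1 < ‖z‖)
      = A.roots.filter (fun z => ¬ ‖z‖ < 1 + η) := by
    apply Multiset.filter_congr
    intro w hw
    constructor
    · intro h1
      rcases hηsep w hw with h | h | h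
      · rw [h] at h1
        exact absurd h1 (lt_irrefl _)
      · exact absurd (by linarith : ‖w‖ < 1) (not_lt.mpr h1.le)
      · exact not_lt.mpr (by linarith)
    · intro h1
      rcases hηsep w hw with h | h | h
      · exact absurd (by rw [h]; linarith : ‖w‖ < 1 + η) h1
      · exact absurd (by linarith : ‖w‖ < 1 + η) h1
      · linarith
  have htot : Multiset.card A.roots
      = Multiset.card (A.roots.filter (fun z => ‖z‖ < 1 + η))
        + Multiset.card (A.roots.filter (fun z => ¬ ‖z‖ < 1 + η)) := by
    rw [← Multiset.card_add, Multiset.filter_add_not]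
  -- assemble
  have hr_eq : Multiset.card (A.roots.filter (fun z => ‖z‖ < 1 + η)) = r := by
    rw [← E3, hAtfilter, E1]
  have hq : Multiset.card A.roots
      = r + Multiset.card (A.roots.filter (fun z => 1 < ‖z‖)) := by
    rw [htot, hr_eq, hcA_out]
  by_cases hp : 0 < p
  · have hdeg : A.natDegree = r + p := by
      have hcoeff : A.coeff (r+p) = ((coef (p:ℤ) : ℝ) : ℂ) := by
        rw [hA, Polynomial.coeff_sub, Polynomial.finset_sum_coeff]
        have h2 : (X^r : ℂ[X]).coeff (r+p) = 0 := by
          rw [Polynomial.coeff_X_pow]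
          simp only [ite_eq_right_iff]
          intro h
          omega
        rw [h2, sub_zero]
        rw [Finset.sum_eq_single ((p:ℕ):ℤ)]
        · rw [Polynomial.coeff_C_mul, Polynomial.coeff_X_pow,
            if_pos (by omega : r + p = (((p:ℕ):ℤ) + (r:ℤ)).toNat), mul_one]
        · intro ℓ hℓ hne
          rw [Polynomial.coeff_C_mul, Polynomial.coeff_X_pow, if_neg, mul_zero]
          have h3 := Finset.mem_Icc.mp hℓ
          omega
        · intro hnot
          exact absurd (Finset.mem_Icc.mpr ⟨by omega, le_refl _⟩) hnot
      have hne : A.coeff (r+p) ≠ 0 := by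
        rw [hcoeff]
        exact_mod_cast right_ne_zero_of_mul hnorm
      exact le_antisymm hdeg_le (Polynomial.le_natDegree_of_ne_zero hne)
    rw [hcard, hdeg] at hq
    omega
  · have hp0 : p = 0 := by omega
    have hle : Multiset.card A.roots ≤ r := by
      rw [hcard]
      have : A.natDegree ≤ r + p := hdeg_le
      omega
    omega
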